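/- Fix an integer n ≥ 1 and a real constant Λ, and define F : ℝ³ → ℝ³ by F(x, y, z) = ((1/2)x(y² + z² − x²), (1/2)y(z² + x² − y²), (1/2)n·z(x² + y² − z² − (2Λ/n)x²y²)). Then F(x, y, z) = 0 if and only if (x, y, z) is of one of the forms (0, K, K), (0, K, −K), (K, 0, K), (K, 0, −K), (K, K, 0), (K, −K, 0) for some K ∈ ℝ. -/
import Mathlib


/- STATEMENT 1: the critical points of the reduced Kähler–Einstein system are precisely
the points (0, K, ±K), (K, 0, ±K), (K, ±K, 0) with K ∈ ℝ. -/

set_option maxHeartbeats 1000000 in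
theorem critical_points_of_reduced_KE_system
    (n : ℕ) (hn : 1 ≤ n) (Λ : ℝ)
    (F : ℝ × ℝ × ℝ → ℝ × ℝ × ℝ)
    (hF : ∀ x y z : ℝ, F (x, y, z) =
      ((1/2) * x * (y ^ 2 + z ^ 2 - x ^ 2),
       (1/2) * y * (z ^ 2 + x ^ 2 - y ^ 2),
       (1/2) * (n : ℝ) * z * (x ^ 2 + y ^ 2 - z ^ 2 - (2 * Λ / (n : ℝ)) * x ^ 2 * y ^ 2))) :
    ∀ x y z : ℝ, F (x, y, z) = 0 ↔ ∃ K : ℝ,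
      (x, y, z) = (0, K, K) ∨ (x, y, z) = (0, K, -K) ∨
      (x, y, z) = (K, 0, K) ∨ (x, y, z) = (K, 0, -K) ∨
      (x, y, z) = (K, K, 0) ∨ (x, y, z) = (K, -K, 0) := by
  have hnpos : (0:ℝ) < (n:ℝ) := by exact_mod_cast hn
  intro x y z
  rw [hF]
  constructor
  · intro h
    simp only [Prod.ext_iff, Prod.fst_zero, Prod.snd_zero] at h
    obtain ⟨h1, h2, h3⟩ := h
    have h1' : x = 0 ∨ y ^ 2 + z ^ 2 - x ^ 2 = 0 := by
      have : x * (y ^ 2 + z ^ 2 - x ^ 2) = 0 := by linarith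
      exact mul_eq_zero.mp this
    have h2' : y = 0 ∨ z ^ 2 + x ^ 2 - y ^ 2 = 0 := by
      have : y * (z ^ 2 + x ^ 2 - y ^ 2) = 0 := by linarith
      exact mul_eq_zero.mp this
    have h3' : z = 0 ∨ x ^ 2 + y ^ 2 - z ^ 2 - (2 * Λ / (n : ℝ)) * x ^ 2 * y ^ 2 = 0 := by
      have h0 : z * (x ^ 2 + y ^ 2 - z ^ 2 - (2 * Λ / (n : ℝ)) * x ^ 2 * y ^ 2) = 0 := by
        have hh : (1/2) * (n:ℝ) ≠ 0 := by positivity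
        have := mul_eq_zero.mp (by linarith [h3] : ((1/2) * (n:ℝ)) *
          (z * (x ^ 2 + y ^ 2 - z ^ 2 - (2 * Λ / (n : ℝ)) * x ^ 2 * y ^ 2)) = 0)
        tauto
      exact mul_eq_zero.mp h0
    rcases h1' with hx | hx
    · subst hx
      rcases h2' with hy | hy
      · subst hy
        have hz : z = 0 := by
          rcases h3' with hz | hz
          · exact hz
          · nlinarith [sq_nonneg z]
        exact ⟨0, Or.inl (by simp [hz])⟩
      · have : (z - y) * (z + y) = 0 := by nlinarith
        rcases mul_eq_zero.mp this with h | h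
        · exact ⟨y, Or.inl (by simp; linarith)⟩
        · exact ⟨y, Or.inr (Or.inl (by simp; linarith))⟩
    · rcases h2' with hy | hy
      · subst hy
        have : (z - x) * (z + x) = 0 := by nlinarith
        rcases mul_eq_zero.mp this with h | h
        · exact ⟨x, Or.inr (Or.inr (Or.inl (by simp; linarith)))⟩
        · exact ⟨x, Or.inr (Or.inr (Or.inr (Or.inl (by simp; linarith))))⟩
      · have hz2 : z ^ 2 = 0 := by linarith
        have hz : z = 0 := by
          have := sq_eq_zero_iff.mp hz2
          exact this
        have : (y - x) * (y + x) = 0 := by nlinarith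
        rcases mul_eq_zero.mp this with h | h
        · exact ⟨x, Or.inr (Or.inr (Or.inr (Or.inr (Or.inl
            (by simp [hz]; linarith)))))⟩
        · exact ⟨x, Or.inr (Or.inr (Or.inr (Or.inr (Or.inr
            (by simp [hz]; linarith)))))⟩
  · rintro ⟨K, h | h | h | h | h | h⟩ <;>
      (simp only [Prod.mk.injEq] at h; obtain ⟨rfl, rfl, rfl⟩ := h) <;>
      · rw [Prod.mk_eq_zero, Prod.mk_eq_zero]
        refine ⟨by ring, by ring, by ring⟩
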